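/- arXiv:math/0311251 — 2 statements merged into one kernel-verified Lean document; each statement's English description precedes it below -/
import Mathlib

section
/- For every λ ∈ ℤ^N, every r ∈ ℤ/pℤ, and every 1 ≤ i ≤ N: i is the position of a + in the reduced r-signature σ̃_r(λ) if and only if there exists a ≥ 0 such that (f̃*_r)^a(λ) ≠ 0 and (f̃*_r)^{a+1}(λ) = (f̃*_r)^a(λ) + ε_i, where f̃*_r is extended by f̃*_r(0) = 0 and (f̃*_r)^0(λ) = λ. -/
namespace Kujawa

open Finset

variable {n : ℕ}

/-- The sign `(−1)^{p̄ i}` attached to the parity sequence `pb`. -/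
def sg (pb : Fin (n + 1) → ZMod 2) (i : Fin (n + 1)) : ℤ :=
  if pb i = 0 then 1 else -1

/-- `ϑ_j = ∑_{i > j} (−1)^{p̄_i + p̄_j}`. -/
def theta (pb : Fin (n + 1) → ZMod 2) (j : Fin (n + 1)) : ℤ :=
  ∑ i ∈ Finset.Ioi j, sg pb i * sg pb j

/-- The standard basis vector `ε_i` of `X(T) = ℤ^N`. -/
def eps (i : Fin (n + 1)) : Fin (n + 1) → ℤ := fun j => if j = i then 1 else 0

/-- The `j`-th residue `r_j(λ) = (λ + ϑ, ε_j)`. -/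
def res (pb : Fin (n + 1) → ZMod 2) (l : Fin (n + 1) → ℤ) (j : Fin (n + 1)) : ℤ :=
  sg pb j * (l j + theta pb j)

/-- `ρ = ϑ + ∑_{i : p̄_i = 0} ε_i`, coordinatewise. -/
def rho (pb : Fin (n + 1) → ZMod 2) (k : Fin (n + 1)) : ℤ :=
  theta pb k + (if pb k = 0 then 1 else 0)

/-- `l(λ) = ∑ λ_i`. -/
def ell (l : Fin (n + 1) → ℤ) : ℤ := ∑ i, l i

/-- The central character value `Z_r(λ)`. -/
def Zint (pb : Fin (n + 1) → ZMod 2) (r : ℕ) (l : Fin (n + 1) → ℤ) : ℤ :=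
  ∑ s ∈ Finset.Icc 1 r, (-1 : ℤ) ^ (s - 1) *
    ∑ K ∈ Finset.powersetCard s (Finset.univ : Finset (Fin (n + 1))),
      ∑ a ∈ Fintype.piFinset (fun _ : Fin (n + 1) => Finset.range (r + 2)),
        if (∑ k ∈ K, a k) = r - s + 1 ∧ (∀ k, k ∉ K → a k = 0) then
          (∏ k ∈ K, sg pb k) * ∏ k ∈ K, res pb l k ^ a k
        else 0

/-- `A_r(λ) = #{i : r_i(λ+ε_i) ≡ r (mod p)}`. -/
def Acount (pb : Fin (n + 1) → ZMod 2) (p : ℕ) (r : ZMod p) (l : Fin (n + 1) → ℤ) : ℕ :=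
  (Finset.univ.filter fun i : Fin (n + 1) => ((res pb (l + eps i) i : ℤ) : ZMod p) = r).card

/-- `B_r(λ) = #{i : r_i(λ) ≡ r (mod p)}`. -/
def Bcount (pb : Fin (n + 1) → ZMod 2) (p : ℕ) (r : ZMod p) (l : Fin (n + 1) → ℤ) : ℕ :=
  (Finset.univ.filter fun i : Fin (n + 1) => ((res pb l i : ℤ) : ZMod p) = r).card

/-- For `p = 0`: `γ_a` is the basis element `single a 1` of the free module `ℤ →₀ ℤ`. -/
noncomputable def gamma0 (a : ℤ) : ℤ →₀ ℤ := Finsupp.single a 1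

/-- `wt` for `p = 0`, with values in the free `ℤ`-module on basis `{γ_a : a ∈ ℤ}`. -/
noncomputable def wt0 (pb : Fin (n + 1) → ZMod 2) (l : Fin (n + 1) → ℤ) : ℤ →₀ ℤ :=
  ∑ i : Fin (n + 1), sg pb i • gamma0 (sg pb i * (l i + rho pb i))

/-- `Λ_r ∈ P = ℤδ ⊕ ⊕_{r ∈ ℤ/pℤ} ℤΛ_r`. -/
def LamP (p : ℕ) (r : ZMod p) : ℤ × (ZMod p → ℤ) := (0, fun s => if s = r then 1 else 0)

/-- `δ ∈ P`. -/
def delP (p : ℕ) : ℤ × (ZMod p → ℤ) := (1, 0)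

/-- `γ_a = Λ_{s mod p} − Λ_{(s−1) mod p} − d·δ`, where `a = p·d + s` with `1 ≤ s ≤ p`. -/
def gammaP (p : ℕ) (a : ℤ) : ℤ × (ZMod p → ℤ) :=
  LamP p (((a - 1) % (p : ℤ) + 1 : ℤ) : ZMod p) - LamP p (((a - 1) % (p : ℤ) : ℤ) : ZMod p) -
    ((a - 1) / (p : ℤ)) • delP p

/-- `wt` for prime `p`. -/
def wtP (p : ℕ) (pb : Fin (n + 1) → ZMod 2) (l : Fin (n + 1) → ℤ) : ℤ × (ZMod p → ℤ) :=
  ∑ i : Fin (n + 1), sg pb i • gammaP p (sg pb i * (l i + rho pb i))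

/-- Entry `i` of the `r`-signature of `λ`: `1` codes `+`, `-1` codes `−`, `0` codes `0`. -/
def sig (pb : Fin (n + 1) → ZMod 2) (p : ℕ) (r : ZMod p) (l : Fin (n + 1) → ℤ)
    (i : Fin (n + 1)) : ℤ :=
  if ((res pb (l + eps i) i : ℤ) : ZMod p) = r then 1
  else if ((res pb l i : ℤ) : ZMod p) = r then -1
  else 0

/-- Number of `−`'s of the `r`-signature of `λ` in positions `[i..j]`. -/
noncomputable def nM (pb : Fin (n + 1) → ZMod 2) (p : ℕ) (r : ZMod p) (l : Fin (n + 1) → ℤ)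
    (i j : Fin (n + 1)) : ℕ :=
  Set.ncard {k : Fin (n + 1) | k ∈ Finset.Icc i j ∧ sig pb p r l k = -1}

/-- Number of `+`'s of the `r`-signature of `λ` in positions `[i..j]`. -/
noncomputable def nP (pb : Fin (n + 1) → ZMod 2) (p : ℕ) (r : ZMod p) (l : Fin (n + 1) → ℤ)
    (i j : Fin (n + 1)) : ℕ :=
  Set.ncard {k : Fin (n + 1) | k ∈ Finset.Icc i j ∧ sig pb p r l k = 1}

/-- `i` is the position of a `−` in the reduced `r`-signature of `λ` (i.e. `i` is
`r`-normal for `λ`): the `−` at `i` is never cancelled, which happens exactly when every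
interval `[i..j]` contains strictly more `−`'s than `+`'s. -/
def RMinus (pb : Fin (n + 1) → ZMod 2) (p : ℕ) (r : ZMod p) (l : Fin (n + 1) → ℤ)
    (i : Fin (n + 1)) : Prop :=
  sig pb p r l i = -1 ∧ ∀ j : Fin (n + 1), i ≤ j → nP pb p r l i j < nM pb p r l i j

/-- `i` is the position of a `+` in the reduced `r`-signature of `λ` (i.e. `i` is
`r`-conormal for `λ`). -/
def RPlus (pb : Fin (n + 1) → ZMod 2) (p : ℕ) (r : ZMod p) (l : Fin (n + 1) → ℤ)
    (i : Fin (n + 1)) : Prop :=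
  sig pb p r l i = 1 ∧ ∀ j : Fin (n + 1), j ≤ i → nM pb p r l j i < nP pb p r l j i

/-- `i` is the position of the leftmost `−` in the reduced `r`-signature (`r`-good). -/
def RGood (pb : Fin (n + 1) → ZMod 2) (p : ℕ) (r : ZMod p) (l : Fin (n + 1) → ℤ)
    (i : Fin (n + 1)) : Prop :=
  RMinus pb p r l i ∧ ∀ j : Fin (n + 1), j < i → ¬ RMinus pb p r l j

/-- `i` is the position of the rightmost `+` in the reduced `r`-signature (`r`-cogood). -/
def RCogood (pb : Fin (n + 1) → ZMod 2) (p : ℕ) (r : ZMod p) (l : Fin (n + 1) → ℤ)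
    (i : Fin (n + 1)) : Prop :=
  RPlus pb p r l i ∧ ∀ j : Fin (n + 1), i < j → ¬ RPlus pb p r l j

open Classical in
/-- The crystal operator `ẽ*_r`, with `none` playing the role of `0`. -/
noncomputable def eStar (pb : Fin (n + 1) → ZMod 2) (p : ℕ) (r : ZMod p)
    (l : Fin (n + 1) → ℤ) : Option (Fin (n + 1) → ℤ) :=
  if h : (Finset.univ.filter (RMinus pb p r l)).Nonempty then
    some (l - eps ((Finset.univ.filter (RMinus pb p r l)).min' h))
  else none

open Classical in
/-- The crystal operator `f̃*_r`, with `none` playing the role of `0`. -/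
noncomputable def fStar (pb : Fin (n + 1) → ZMod 2) (p : ℕ) (r : ZMod p)
    (l : Fin (n + 1) → ℤ) : Option (Fin (n + 1) → ℤ) :=
  if h : (Finset.univ.filter (RPlus pb p r l)).Nonempty then
    some (l + eps ((Finset.univ.filter (RPlus pb p r l)).max' h))
  else none

/-- `A ↓ B`: there is an injection `θ : A → B` with `θ a ≤ a` for all `a ∈ A`. -/
def Down (A B : Finset (Fin (n + 1))) : Prop :=
  ∃ θ : Fin (n + 1) → Fin (n + 1), Set.InjOn θ ↑A ∧ ∀ a ∈ A, θ a ∈ B ∧ θ a ≤ a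

/-- `C_{i,j}(λ) = {h ∈ (i..j) : c_{i,h}(λ) ≡ 0 (mod p)}`. -/
def Cset (pb : Fin (n + 1) → ZMod 2) (p : ℕ) (l : Fin (n + 1) → ℤ) (i j : Fin (n + 1)) :
    Finset (Fin (n + 1)) :=
  (Finset.Ioo i j).filter fun h => ((res pb l i - res pb l h : ℤ) : ZMod p) = 0

/-- `B_{i,j}(λ) = {h ∈ [i..j) : b_{i,h}(λ) ≡ 0 (mod p)}`. -/
def Bset (pb : Fin (n + 1) → ZMod 2) (p : ℕ) (l : Fin (n + 1) → ℤ) (i j : Fin (n + 1)) :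
    Finset (Fin (n + 1)) :=
  (Finset.Ico i j).filter fun h =>
    ((res pb l i - res pb (l + eps (h + 1)) (h + 1) : ℤ) : ZMod p) = 0

/-- The opposite parity sequence `p̄′_k = p̄_{w₀ k} + 1̄`, where `w₀ k = N + 1 − k`. -/
def pbRev (pb : Fin (n + 1) → ZMod 2) : Fin (n + 1) → ZMod 2 := fun k => pb k.rev + 1

/-- `s̃ : ℤ^N → ℤ^N`, `(s̃ λ)_{w₀ i} = −λ_i`. -/
def stilde (l : Fin (n + 1) → ℤ) : Fin (n + 1) → ℤ := fun k => -l k.rev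

/-- `(i, j)` is an `r`-canceling pair for `λ` (for `i < j`). -/
def CPair (pb : Fin (n + 1) → ZMod 2) (p : ℕ) (r : ZMod p) (l : Fin (n + 1) → ℤ)
    (i j : Fin (n + 1)) : Prop :=
  sig pb p r l i = -1 ∧ sig pb p r l j = 1 ∧
    ∀ k : Fin (n + 1), i < k → k < j → sig pb p r l k = 0

/-- `(i i+1)·λ`: interchange coordinates `i` and `i+1`. -/
def swapL (i : Fin (n + 1)) (l : Fin (n + 1) → ℤ) : Fin (n + 1) → ℤ :=
  fun k => if k = i then l (i + 1) else if k = i + 1 then l i else l k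

/-- The parity sequence obtained from `pb` by interchanging entries `i` and `i+1`. -/
def pbSwap (pb : Fin (n + 1) → ZMod 2) (i : Fin (n + 1)) : Fin (n + 1) → ZMod 2 :=
  fun k => if k = i then pb (i + 1) else if k = i + 1 then pb i else pb k

/-- The odd reflection `s_i` on `X(T)`. -/
def sI (pb : Fin (n + 1) → ZMod 2) (p : ℕ) (i : Fin (n + 1)) (l : Fin (n + 1) → ℤ) :
    Fin (n + 1) → ℤ :=
  if ((sg pb i * l i - sg pb (i + 1) * l (i + 1) : ℤ) : ZMod p) = 0 then swapL i l
  else swapL i l + eps i - eps (i + 1)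

/- ===== Auxiliary lemmas ===== -/

lemma sig_congr (pb : Fin (n + 1) → ZMod 2) (p : ℕ) (r : ZMod p) {l m : Fin (n + 1) → ℤ}
    {k : Fin (n + 1)} (h : l k = m k) : sig pb p r l k = sig pb p r m k := by
  have h1 : res pb (l + eps k) k = res pb (m + eps k) k := by
    simp [res, Pi.add_apply, h]
  have h2 : res pb l k = res pb m k := by simp [res, h]
  simp [sig, h1, h2]

lemma sig_add_eps (pb : Fin (n + 1) → ZMod 2) (p : ℕ) (r : ZMod p) (l : Fin (n + 1) → ℤ)
    {j k : Fin (n + 1)} (hk : k ≠ j) :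
    sig pb p r (l + eps j) k = sig pb p r l k :=
  sig_congr pb p r (by simp [eps, Pi.add_apply, hk])

lemma sg_cast_ne (p : ℕ) (hp : p = 0 ∨ p.Prime) (pb : Fin (n + 1) → ZMod 2) (j : Fin (n + 1)) :
    ((sg pb j : ℤ) : ZMod p) ≠ 0 := by
  intro h
  rw [ZMod.intCast_zmod_eq_zero_iff_dvd] at h
  have hu : sg pb j = 1 ∨ sg pb j = -1 := by unfold sg; split <;> simp
  have h1 : (p : ℤ) ∣ 1 := by
    rcases hu with h' | h'
    · rwa [h'] at h
    · rw [h'] at h; exact dvd_neg.mp h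
  rcases hp with rfl | hp
  · simp at h1
  · have := Int.le_of_dvd one_pos h1
    have := hp.two_le
    omega

lemma sig_eq_one_cond {pb : Fin (n + 1) → ZMod 2} {p : ℕ} {r : ZMod p} {l : Fin (n + 1) → ℤ}
    {j : Fin (n + 1)} (h : sig pb p r l j = 1) :
    ((res pb (l + eps j) j : ℤ) : ZMod p) = r := by
  unfold sig at h
  split_ifs at h with h1 h2
  · exact h1
  all_goals exact absurd h (by norm_num)

lemma sig_add_eps_self (p : ℕ) (hp : p = 0 ∨ p.Prime) (pb : Fin (n + 1) → ZMod 2) (r : ZMod p)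
    (l : Fin (n + 1) → ℤ) (j : Fin (n + 1)) (h : sig pb p r l j = 1) :
    sig pb p r (l + eps j) j = -1 := by
  have h1 : ((res pb (l + eps j) j : ℤ) : ZMod p) = r := sig_eq_one_cond h
  have key : res pb (l + eps j + eps j) j = res pb (l + eps j) j + sg pb j := by
    simp [res, eps]; ring
  have hne : ((res pb ((l + eps j) + eps j) j : ℤ) : ZMod p) ≠ r := by
    rw [key]
    push_cast
    rw [h1]
    intro hc
    exact sg_cast_ne p hp pb j (by
      have := add_eq_left.mp hc
      exact_mod_cast this)
  unfold sig
  rw [if_neg hne, if_pos h1]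

lemma nM_congr {pb : Fin (n + 1) → ZMod 2} {p : ℕ} {r : ZMod p} {l m : Fin (n + 1) → ℤ}
    {i j : Fin (n + 1)} (h : ∀ k ∈ Finset.Icc i j, sig pb p r l k = sig pb p r m k) :
    nM pb p r l i j = nM pb p r m i j := by
  unfold nM
  congr 1
  ext k
  exact and_congr_right fun hk => by rw [h k hk]

lemma nP_congr {pb : Fin (n + 1) → ZMod 2} {p : ℕ} {r : ZMod p} {l m : Fin (n + 1) → ℤ}
    {i j : Fin (n + 1)} (h : ∀ k ∈ Finset.Icc i j, sig pb p r l k = sig pb p r m k) :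
    nP pb p r l i j = nP pb p r m i j := by
  unfold nP
  congr 1
  ext k
  exact and_congr_right fun hk => by rw [h k hk]

lemma rplus_step_mem (pb : Fin (n + 1) → ZMod 2) (p : ℕ) (r : ZMod p) (l : Fin (n + 1) → ℤ)
    {i j : Fin (n + 1)} (hij : i < j) (hi : RPlus pb p r l i) :
    RPlus pb p r (l + eps j) i := by
  refine ⟨?_, fun a ha => ?_⟩
  · rw [sig_add_eps pb p r l (ne_of_lt hij)]; exact hi.1
  · have hcg : ∀ k ∈ Finset.Icc a i, sig pb p r (l + eps j) k = sig pb p r l k := by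
      intro k hk
      have hki : k ≤ i := (Finset.mem_Icc.mp hk).2
      exact sig_add_eps pb p r l (ne_of_lt (lt_of_le_of_lt hki hij))
    rw [nM_congr hcg, nP_congr hcg]
    exact hi.2 a ha

lemma rplus_step_sub (p : ℕ) (hp : p = 0 ∨ p.Prime) (pb : Fin (n + 1) → ZMod 2) (r : ZMod p)
    (l : Fin (n + 1) → ℤ) {j : Fin (n + 1)} (hj : sig pb p r l j = 1)
    {i : Fin (n + 1)} (hi : RPlus pb p r (l + eps j) i) :
    RPlus pb p r l i ∧ i ≠ j := by
  have hjm : sig pb p r (l + eps j) j = -1 := sig_add_eps_self p hp pb r l j hj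
  have hne : i ≠ j := by
    intro h
    have := hi.1
    rw [h, hjm] at this
    norm_num at this
  refine ⟨⟨?_, fun a ha => ?_⟩, hne⟩
  · rw [← sig_add_eps pb p r l hne]; exact hi.1
  · have hM : nM pb p r l a i ≤ nM pb p r (l + eps j) a i := by
      apply Set.ncard_le_ncard ?_ (Set.toFinite _)
      rintro k ⟨hk, hs⟩
      have hkj : k ≠ j := by
        intro h'
        rw [h', hj] at hs
        norm_num at hs
      exact ⟨hk, by rw [sig_add_eps pb p r l hkj]; exact hs⟩
    have hP : nP pb p r (l + eps j) a i ≤ nP pb p r l a i := by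
      apply Set.ncard_le_ncard ?_ (Set.toFinite _)
      rintro k ⟨hk, hs⟩
      have hkj : k ≠ j := by
        intro h'
        rw [h', hjm] at hs
        norm_num at hs
      exact ⟨hk, by rw [← sig_add_eps pb p r l hkj]; exact hs⟩
    have := hi.2 a ha
    omega

open Classical in
lemma fStar_eq_of_nonempty (pb : Fin (n + 1) → ZMod 2) (p : ℕ) (r : ZMod p)
    (l : Fin (n + 1) → ℤ) (h : (Finset.univ.filter (RPlus pb p r l)).Nonempty) :
    fStar pb p r l = some (l + eps ((Finset.univ.filter (RPlus pb p r l)).max' h)) := by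
  rw [fStar, dif_pos h]

open Classical in
lemma fStar_eq_none (pb : Fin (n + 1) → ZMod 2) (p : ℕ) (r : ZMod p)
    (l : Fin (n + 1) → ℤ) (h : ¬ (Finset.univ.filter (RPlus pb p r l)).Nonempty) :
    fStar pb p r l = none := by
  rw [fStar, dif_neg h]

open Classical in
lemma forward_aux (p : ℕ) (hp : p = 0 ∨ p.Prime) (pb : Fin (n + 1) → ZMod 2) (r : ZMod p) :
    ∀ N : ℕ, ∀ l : Fin (n + 1) → ℤ, (Finset.univ.filter (RPlus pb p r l)).card ≤ N →
      ∀ i, RPlus pb p r l i →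
      ∃ a mu, (fun o => Option.bind o (fStar pb p r))^[a] (some l) = some mu ∧
        (fun o => Option.bind o (fStar pb p r))^[a + 1] (some l) = some (mu + eps i) := by
  intro N
  induction N with
  | zero =>
    intro l hc i hi
    have : i ∈ Finset.univ.filter (RPlus pb p r l) := by simp [hi]
    have := Finset.card_pos.mpr ⟨i, this⟩
    omega
  | succ N IH =>
    intro l hc i hi
    have hmem : i ∈ Finset.univ.filter (RPlus pb p r l) := by simp [hi]
    have hne : (Finset.univ.filter (RPlus pb p r l)).Nonempty := ⟨i, hmem⟩
    set j := (Finset.univ.filter (RPlus pb p r l)).max' hne with hjdef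
    have hjR : RPlus pb p r l j := by
      have := Finset.max'_mem (Finset.univ.filter (RPlus pb p r l)) hne
      simpa using this
    have hstep : Option.bind (some l) (fStar pb p r) = some (l + eps j) := by
      simp only [Option.bind_eq_bind, Option.bind_some]
      exact fStar_eq_of_nonempty pb p r l hne
    by_cases hij : i = j
    · refine ⟨0, l, rfl, ?_⟩
      simpa [hij] using hstep
    · have hle : i ≤ j := Finset.le_max' _ i hmem
      have hij' : i < j := lt_of_le_of_ne hle hij
      have hRi' : RPlus pb p r (l + eps j) i := rplus_step_mem pb p r l hij' hi
      have hsub : (Finset.univ.filter (RPlus pb p r (l + eps j))) ⊆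
          (Finset.univ.filter (RPlus pb p r l)).erase j := by
        intro k hk
        simp only [Finset.mem_filter, Finset.mem_univ, true_and] at hk
        obtain ⟨hk1, hk2⟩ := rplus_step_sub p hp pb r l hjR.1 hk
        exact Finset.mem_erase.mpr ⟨hk2, by simp [hk1]⟩
      have hcard : (Finset.univ.filter (RPlus pb p r (l + eps j))).card ≤ N := by
        have h1 := Finset.card_le_card hsub
        have h2 : ((Finset.univ.filter (RPlus pb p r l)).erase j).card =
            (Finset.univ.filter (RPlus pb p r l)).card - 1 :=
          Finset.card_erase_of_mem (by simp [hjR])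
        have h3 := Finset.card_pos.mpr hne
        omega
      obtain ⟨a, mu, ha1, ha2⟩ := IH (l + eps j) hcard i hRi'
      refine ⟨a + 1, mu, ?_, ?_⟩
      · rw [Function.iterate_succ_apply]
        simpa [hstep] using ha1
      · rw [Function.iterate_succ_apply]
        simpa [hstep] using ha2

open Classical in
lemma backward_aux (p : ℕ) (hp : p = 0 ∨ p.Prime) (pb : Fin (n + 1) → ZMod 2) (r : ZMod p) :
    ∀ a : ℕ, ∀ l mu : Fin (n + 1) → ℤ,
      (fun o => Option.bind o (fStar pb p r))^[a] (some l) = some mu →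
      ∀ i, RPlus pb p r mu i → RPlus pb p r l i := by
  intro a
  induction a with
  | zero =>
    intro l mu h i hi
    simp only [Function.iterate_zero, id_eq, Option.some.injEq] at h
    rwa [h]
  | succ a IH =>
    intro l mu h i hi
    rw [Function.iterate_succ_apply] at h
    by_cases hne : (Finset.univ.filter (RPlus pb p r l)).Nonempty
    · set j := (Finset.univ.filter (RPlus pb p r l)).max' hne with hjdef
      have hjR : RPlus pb p r l j := by
        have := Finset.max'_mem (Finset.univ.filter (RPlus pb p r l)) hne
        simpa using this
      have hstep : Option.bind (some l) (fStar pb p r) = some (l + eps j) := by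
        simp only [Option.bind_eq_bind, Option.bind_some]
        exact fStar_eq_of_nonempty pb p r l hne
      rw [hstep] at h
      have := IH (l + eps j) mu h i hi
      exact (rplus_step_sub p hp pb r l hjR.1 this).1
    · have hnone : fStar pb p r l = none := fStar_eq_none pb p r l hne
      have hfix : (fun (o : Option (Fin (n+1) → ℤ)) => Option.bind o (fStar pb p r))^[a]
          none = none := Function.iterate_fixed rfl a
      rw [show (some l).bind (fStar pb p r) = none by simp [hnone], hfix] at h
      exact absurd h (by simp)

/-- `i` is the position of a `+` in the reduced `r`-signature of `λ` iff
`(f̃*_r)^{a+1}(λ) = (f̃*_r)^a(λ) + ε_i` for some `a ≥ 0` with `(f̃*_r)^a(λ) ≠ 0`. -/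
theorem statement15 (p : ℕ) (hp : p = 0 ∨ p.Prime) (pb : Fin (n + 1) → ZMod 2)
    (lam : Fin (n + 1) → ℤ) (r : ZMod p) (i : Fin (n + 1)) :
    RPlus pb p r lam i ↔
      ∃ (a : ℕ) (mu : Fin (n + 1) → ℤ),
        (fun o => Option.bind o (fStar pb p r))^[a] (some lam) = some mu ∧
          (fun o => Option.bind o (fStar pb p r))^[a + 1] (some lam) = some (mu + eps i) := by
  classical
  constructor
  · intro hi
    exact forward_aux p hp pb r (Finset.univ.filter (RPlus pb p r lam)).card lam le_rfl i hi
  · rintro ⟨a, mu, h1, h2⟩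
    rw [Function.iterate_succ_apply', h1] at h2
    simp only [Option.bind_eq_bind, Option.bind_some] at h2
    -- h2 : fStar pb p r mu = some (mu + eps i)
    by_cases hne : (Finset.univ.filter (RPlus pb p r mu)).Nonempty
    · set j := (Finset.univ.filter (RPlus pb p r mu)).max' hne with hjdef
      have hjR : RPlus pb p r mu j := by
        have := Finset.max'_mem (Finset.univ.filter (RPlus pb p r mu)) hne
        simpa using this
      have heq : fStar pb p r mu = some (mu + eps j) := fStar_eq_of_nonempty pb p r mu hne
      rw [heq] at h2
      have h3 : mu + eps j = mu + eps i := Option.some_injective _ h2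
      have h4 : eps j = eps i := add_left_cancel h3
      have h5 : i = j := by
        have := congrFun h4 i
        simp only [eps] at this
        by_contra hc
        simp [hc, Ne.symm hc] at this
      have : RPlus pb p r mu i := by rw [h5]; exact hjR
      exact backward_aux p hp pb r a lam mu h1 i this
    · rw [fStar_eq_none pb p r mu hne] at h2
      exact absurd h2 (by simp)

end Kujawa
end

section
/- For every λ ∈ ℤ^N and every r ∈ ℤ/pℤ: s_i(f̃*_r(λ)) = f̃*′_r(s_i(λ)), where s_i is extended by s_i(0) = 0; in particular f̃*_r(λ) ≠ 0 if and only if f̃*′_r(s_i(λ)) ≠ 0. -/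
namespace Kujawa

open Finset

variable {n : ℕ}

lemma val_add_one {i : Fin (n + 1)} (hi : (i : ℕ) < n) : ((i + 1 : Fin (n + 1)) : ℕ) = (i : ℕ) + 1 := by
  have : i < Fin.last n := by rw [Fin.lt_def]; simpa using hi
  exact Fin.val_add_one_of_lt this

def RPW (w : Fin (n + 1) → ℤ) (k : Fin (n + 1)) : Prop :=
  w k = 1 ∧ ∀ j, j ≤ k → 0 < ∑ t ∈ Finset.Icc j k, w t

section WordLemmas

variable {i I : Fin (n + 1)}

lemma sum_off {u v : Fin (n + 1) → ℤ} (Hoff : ∀ k, k ≠ i → k ≠ I → u k = v k)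
    {s : Finset (Fin (n + 1))} (hs : ∀ t ∈ s, t ≠ i ∧ t ≠ I) :
    ∑ t ∈ s, u t = ∑ t ∈ s, v t :=
  Finset.sum_congr rfl fun t ht => Hoff t (hs t ht).1 (hs t ht).2

lemma icc_split2 {j k : Fin (n + 1)} (h1 : (I : ℕ) = (i : ℕ) + 1) (hj : j ≤ i) (hk : I ≤ k) :
    Finset.Icc j k =
      insert i (insert I ((Finset.Icc j k).filter (fun t => t ≠ i ∧ t ≠ I))) := by
  ext t
  simp only [Finset.mem_insert, Finset.mem_filter, Finset.mem_Icc, Fin.le_def, Fin.ext_iff, ne_eq]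
  have hj' : (j : ℕ) ≤ (i : ℕ) := hj
  have hk' : (I : ℕ) ≤ (k : ℕ) := hk
  omega

lemma sum_split2 {j k : Fin (n + 1)} (h1 : (I : ℕ) = (i : ℕ) + 1) (hj : j ≤ i) (hk : I ≤ k)
    (w : Fin (n + 1) → ℤ) :
    ∑ t ∈ Finset.Icc j k, w t =
      w i + w I + ∑ t ∈ (Finset.Icc j k).filter (fun t => t ≠ i ∧ t ≠ I), w t := by
  conv_lhs => rw [icc_split2 h1 hj hk]
  rw [Finset.sum_insert, Finset.sum_insert]
  · ring
  · simp only [Finset.mem_filter, ne_eq]; tauto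
  · simp only [Finset.mem_insert, Finset.mem_filter, Finset.mem_Icc, Fin.le_def, ne_eq,
      Fin.ext_iff, not_true, false_and, and_false, or_false]
    omega

lemma icc_split_i {j : Fin (n + 1)} (h1 : (I : ℕ) = (i : ℕ) + 1) (hj : j ≤ i) :
    Finset.Icc j i = insert i ((Finset.Icc j i).filter (fun t => t ≠ i ∧ t ≠ I)) := by
  ext t
  simp only [Finset.mem_insert, Finset.mem_filter, Finset.mem_Icc, Fin.le_def, Fin.ext_iff, ne_eq]
  have hj' : (j : ℕ) ≤ (i : ℕ) := hj
  omega

lemma sum_split_i {j : Fin (n + 1)} (h1 : (I : ℕ) = (i : ℕ) + 1) (hj : j ≤ i)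
    (w : Fin (n + 1) → ℤ) :
    ∑ t ∈ Finset.Icc j i, w t =
      w i + ∑ t ∈ (Finset.Icc j i).filter (fun t => t ≠ i ∧ t ≠ I), w t := by
  conv_lhs => rw [icc_split_i h1 hj]
  rw [Finset.sum_insert]
  simp only [Finset.mem_filter, ne_eq]; tauto

lemma icc_split_I1 {k : Fin (n + 1)} (h1 : (I : ℕ) = (i : ℕ) + 1) (hk : I ≤ k) :
    Finset.Icc I k = insert I ((Finset.Icc I k).filter (fun t => t ≠ i ∧ t ≠ I)) := by
  ext t
  simp only [Finset.mem_insert, Finset.mem_filter, Finset.mem_Icc, Fin.le_def, Fin.ext_iff, ne_eq]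
  have hk' : (I : ℕ) ≤ (k : ℕ) := hk
  omega

lemma sum_split_I1 {k : Fin (n + 1)} (h1 : (I : ℕ) = (i : ℕ) + 1) (hk : I ≤ k)
    (w : Fin (n + 1) → ℤ) :
    ∑ t ∈ Finset.Icc I k, w t =
      w I + ∑ t ∈ (Finset.Icc I k).filter (fun t => t ≠ i ∧ t ≠ I), w t := by
  conv_lhs => rw [icc_split_I1 h1 hk]
  rw [Finset.sum_insert]
  simp only [Finset.mem_filter, ne_eq]; tauto

lemma filter_icc_eq_i {j : Fin (n + 1)} (h1 : (I : ℕ) = (i : ℕ) + 1) :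
    ((Finset.Icc j I).filter (fun t => t ≠ i ∧ t ≠ I)) =
      ((Finset.Icc j i).filter (fun t => t ≠ i ∧ t ≠ I)) := by
  ext t
  simp only [Finset.mem_filter, Finset.mem_Icc, Fin.le_def, Fin.ext_iff, ne_eq]
  omega

lemma filter_icc_eq_I1 {k : Fin (n + 1)} (h1 : (I : ℕ) = (i : ℕ) + 1) :
    ((Finset.Icc I k).filter (fun t => t ≠ i ∧ t ≠ I)) =
      ((Finset.Icc i k).filter (fun t => t ≠ i ∧ t ≠ I)) := by
  ext t
  simp only [Finset.mem_filter, Finset.mem_Icc, Fin.le_def, Fin.ext_iff, ne_eq]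
  omega

lemma filter_icc_jsucc {k J : Fin (n + 1)} (h1 : (I : ℕ) = (i : ℕ) + 1)
    (hJ : (J : ℕ) = (i : ℕ) + 2) :
    Finset.Icc J k = ((Finset.Icc i k).filter (fun t => t ≠ i ∧ t ≠ I)) := by
  ext t
  simp only [Finset.mem_filter, Finset.mem_Icc, Fin.le_def, Fin.ext_iff, ne_eq]
  omega

lemma sum_singleton' (w : Fin (n + 1) → ℤ) (k : Fin (n + 1)) :
    ∑ t ∈ Finset.Icc k k, w t = w k := by
  rw [Finset.Icc_self, Finset.sum_singleton]

lemma rpw_not_at_I {u : Fin (n + 1) → ℤ} (h1 : (I : ℕ) = (i : ℕ) + 1)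
    (hu : (u i = -1 ∧ u I = 1) ∨ (u i = 0 ∧ u I = 0)) : ¬ RPW u I := by
  rcases hu with ⟨hi0, hI0⟩ | ⟨hi0, hI0⟩
  · rintro ⟨-, h2⟩
    have hiI : i ≤ I := by rw [Fin.le_def]; omega
    have hx := h2 i hiI
    have hicc : Finset.Icc i I = {i, I} := by
      ext t
      simp only [Finset.mem_Icc, Finset.mem_insert, Finset.mem_singleton, Fin.le_def,
        Fin.ext_iff]
      omega
    rw [hicc, Finset.sum_pair (by simp only [ne_eq, Fin.ext_iff]; omega)] at hx
    omega
  · rintro ⟨h, -⟩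
    rw [hI0] at h
    exact one_ne_zero h.symm

/-- The cancelling-pair transfer, one direction. -/
lemma WLcancel_mp {u v : Fin (n + 1) → ℤ} (h1 : (I : ℕ) = (i : ℕ) + 1)
    (Hoff : ∀ k, k ≠ i → k ≠ I → u k = v k)
    (hu : (u i = -1 ∧ u I = 1) ∨ (u i = 0 ∧ u I = 0))
    (hv : (v i = -1 ∧ v I = 1) ∨ (v i = 0 ∧ v I = 0)) :
    ∀ k, RPW u k → RPW v k := by
  rintro k ⟨hk1, hk2⟩
  have hki : k ≠ i := by
    intro h; subst h
    rcases hu with ⟨h', -⟩ | ⟨h', -⟩ <;> omega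
  have hkI : k ≠ I := by
    intro h; subst h
    exact rpw_not_at_I h1 hu ⟨hk1, hk2⟩
  have hvk : v k = u k := (Hoff k hki hkI).symm
  have htri : (k : ℕ) < (i : ℕ) ∨ (i : ℕ) + 1 < (k : ℕ) := by
    have h2 : (k : ℕ) ≠ (i : ℕ) := fun h => hki (Fin.ext h)
    have h3 : (k : ℕ) ≠ (I : ℕ) := fun h => hkI (Fin.ext h)
    omega
  rcases htri with hlow | hhigh
  · refine ⟨by rw [hvk, hk1], ?_⟩
    intro j hj
    have hje : (j : ℕ) ≤ (k : ℕ) := hj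
    have := hk2 j hj
    rwa [sum_off Hoff (fun t ht => ?_)] at this
    rw [Finset.mem_Icc] at ht
    have ht2 : (t : ℕ) ≤ (k : ℕ) := ht.2
    constructor <;> (simp only [ne_eq, Fin.ext_iff]; omega)
  · have hIk : I ≤ k := by rw [Fin.le_def]; omega
    have hik : i ≤ k := by rw [Fin.le_def]; omega
    have hpairu : u i + u I = 0 := by rcases hu with ⟨h', h''⟩ | ⟨h', h''⟩ <;> omega
    have hpairv : v i + v I = 0 := by rcases hv with ⟨h', h''⟩ | ⟨h', h''⟩ <;> omega
    refine ⟨by rw [hvk, hk1], ?_⟩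
    intro j hj
    have hje : (j : ℕ) ≤ (k : ℕ) := hj
    have htrij : (j : ℕ) ≤ (i : ℕ) ∨ (j : ℕ) = (i : ℕ) + 1 ∨ (i : ℕ) + 1 < (j : ℕ) := by omega
    rcases htrij with hji | hjI | hjh
    · have hji' : j ≤ i := hji
      have key : ∑ t ∈ Finset.Icc j k, v t = ∑ t ∈ Finset.Icc j k, u t := by
        rw [sum_split2 h1 hji' hIk u, sum_split2 h1 hji' hIk v,
          sum_off Hoff (fun t ht => (Finset.mem_filter.mp ht).2)]
        omega
      rw [key]; exact hk2 j hj
    · have hjI' : j = I := Fin.ext (by omega)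
      rw [hjI']
      have hFu : 0 < ∑ t ∈ (Finset.Icc i k).filter (fun t => t ≠ i ∧ t ≠ I), u t := by
        have := hk2 i hik
        rw [sum_split2 h1 le_rfl hIk u] at this
        omega
      have hFv : ∑ t ∈ (Finset.Icc i k).filter (fun t => t ≠ i ∧ t ≠ I), v t
          = ∑ t ∈ (Finset.Icc i k).filter (fun t => t ≠ i ∧ t ≠ I), u t :=
        (sum_off Hoff (fun t ht => (Finset.mem_filter.mp ht).2)).symm
      rw [sum_split_I1 h1 hIk v, filter_icc_eq_I1 h1, hFv]
      have hvI : v I = 0 ∨ v I = 1 := by rcases hv with ⟨-, h''⟩ | ⟨-, h''⟩ <;> omega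
      rcases hvI with h'' | h'' <;> omega
    · have := hk2 j hj
      rwa [sum_off Hoff (fun t ht => ?_)] at this
      rw [Finset.mem_Icc] at ht
      have ht1 : (j : ℕ) ≤ (t : ℕ) := ht.1
      constructor <;> (simp only [ne_eq, Fin.ext_iff]; omega)

lemma WLcancel {u v : Fin (n + 1) → ℤ} (h1 : (I : ℕ) = (i : ℕ) + 1)
    (Hoff : ∀ k, k ≠ i → k ≠ I → u k = v k)
    (hu : (u i = -1 ∧ u I = 1) ∨ (u i = 0 ∧ u I = 0))
    (hv : (v i = -1 ∧ v I = 1) ∨ (v i = 0 ∧ v I = 0)) :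
    ∀ k, RPW v k ↔ RPW u k := fun k =>
  ⟨WLcancel_mp h1 (fun k' h h' => (Hoff k' h h').symm) hv hu k,
   WLcancel_mp h1 Hoff hu hv k⟩

lemma plusplus {u : Fin (n + 1) → ℤ} (h1 : (I : ℕ) = (i : ℕ) + 1)
    (huI : u I = 1) (h : RPW u i) : RPW u I := by
  obtain ⟨hui, h2⟩ := h
  refine ⟨huI, ?_⟩
  intro j hj
  have hje : (j : ℕ) ≤ (I : ℕ) := hj
  have htrij : (j : ℕ) ≤ (i : ℕ) ∨ (j : ℕ) = (I : ℕ) := by omega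
  rcases htrij with hji | hjI
  · have hji' : j ≤ i := hji
    have := h2 j hji'
    rw [sum_split2 h1 hji' le_rfl u, filter_icc_eq_i h1]
    rw [sum_split_i h1 hji' u] at this
    omega
  · have : j = I := Fin.ext hjI
    subst this
    rw [sum_singleton']
    omega

/-- The shift transfer: `u = (x,0)`, `v = (0,x)` at `(i,I)`. -/
lemma WLshift {u v : Fin (n + 1) → ℤ} (h1 : (I : ℕ) = (i : ℕ) + 1)
    (Hoff : ∀ k, k ≠ i → k ≠ I → u k = v k)
    (huI : u I = 0) (hvi : v i = 0) (hvI : v I = u i) :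
    ∀ k, RPW v k ↔ RPW u (if k = i then I else if k = I then i else k) := by
  have hiI : i ≠ I := by simp only [ne_eq, Fin.ext_iff]; omega
  intro k
  by_cases hki : k = i
  · rw [if_pos hki, hki]
    constructor
    · rintro ⟨h', -⟩; exact absurd (hvi ▸ h') (by norm_num)
    · rintro ⟨h', -⟩; exact absurd (huI ▸ h') (by norm_num)
  rw [if_neg hki]
  by_cases hkI : k = I
  · rw [if_pos hkI, hkI]
    constructor
    · rintro ⟨hv1, hv2⟩
      refine ⟨by rw [← hvI, hv1], ?_⟩
      intro j hj
      have hjI : j ≤ I := by rw [Fin.le_def]; have : (j:ℕ) ≤ (i:ℕ) := hj; omega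
      have := hv2 j hjI
      have key : ∑ t ∈ Finset.Icc j I, v t = ∑ t ∈ Finset.Icc j i, u t := by
        rw [sum_split2 h1 hj le_rfl v, filter_icc_eq_i h1, sum_split_i h1 hj u,
          ← sum_off Hoff (fun t ht => (Finset.mem_filter.mp ht).2)]
        omega
      rwa [key] at this
    · rintro ⟨hu1, hu2⟩
      refine ⟨by rw [hvI, hu1], ?_⟩
      intro j hj
      have hje : (j : ℕ) ≤ (I : ℕ) := hj
      have htrij : (j : ℕ) ≤ (i : ℕ) ∨ (j : ℕ) = (I : ℕ) := by omega
      rcases htrij with hji | hjI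
      · have hji' : j ≤ i := hji
        have := hu2 j hji'
        have key : ∑ t ∈ Finset.Icc j I, v t = ∑ t ∈ Finset.Icc j i, u t := by
          rw [sum_split2 h1 hji' le_rfl v, filter_icc_eq_i h1, sum_split_i h1 hji' u,
            ← sum_off Hoff (fun t ht => (Finset.mem_filter.mp ht).2)]
          omega
        rw [key]; exact this
      · have hjeq : j = I := Fin.ext hjI
        rw [hjeq, sum_singleton', hvI]
        have := hu2 i le_rfl
        rwa [sum_singleton'] at this
  · -- k ≠ i, k ≠ I
    rw [if_neg hkI]
    have htri : (k : ℕ) < (i : ℕ) ∨ (i : ℕ) + 1 < (k : ℕ) := by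
      have h2 : (k : ℕ) ≠ (i : ℕ) := fun h => hki (Fin.ext h)
      have h3 : (k : ℕ) ≠ (I : ℕ) := fun h => hkI (Fin.ext h)
      omega
    have hvk : v k = u k := (Hoff k hki hkI).symm
    rcases htri with hlow | hhigh
    · -- k below i : everything agrees
      have key : ∀ j, j ≤ k → ∑ t ∈ Finset.Icc j k, v t = ∑ t ∈ Finset.Icc j k, u t := by
        intro j hj
        refine (sum_off Hoff (fun t ht => ?_)).symm
        rw [Finset.mem_Icc] at ht
        have ht2 : (t : ℕ) ≤ (k : ℕ) := ht.2
        constructor <;> (simp only [ne_eq, Fin.ext_iff]; omega)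
      constructor
      · rintro ⟨h', h''⟩
        exact ⟨by rw [← hvk, h'], fun j hj => (key j hj) ▸ h'' j hj⟩
      · rintro ⟨h', h''⟩
        exact ⟨by rw [hvk, h'], fun j hj => (key j hj).symm ▸ h'' j hj⟩
    · -- k above I
      have hIk : I ≤ k := by rw [Fin.le_def]; omega
      have hik : i ≤ k := by rw [Fin.le_def]; omega
      have hkn : (k : ℕ) ≤ n := by omega
      set J : Fin (n + 1) := ⟨(i : ℕ) + 2, by omega⟩ with hJdef
      have hJ : (J : ℕ) = (i : ℕ) + 2 := rfl
      have hJk : J ≤ k := by rw [Fin.le_def]; show (i:ℕ) + 2 ≤ (k:ℕ); omega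
      have hFeq : ∑ t ∈ (Finset.Icc i k).filter (fun t => t ≠ i ∧ t ≠ I), v t
          = ∑ t ∈ (Finset.Icc i k).filter (fun t => t ≠ i ∧ t ≠ I), u t :=
        (sum_off Hoff (fun t ht => (Finset.mem_filter.mp ht).2)).symm
      have keylow : ∀ j, j ≤ i → ∑ t ∈ Finset.Icc j k, v t = ∑ t ∈ Finset.Icc j k, u t := by
        intro j hj
        rw [sum_split2 h1 hj hIk u, sum_split2 h1 hj hIk v,
          ← sum_off Hoff (fun t ht => (Finset.mem_filter.mp ht).2)]
        omega
      have keyhigh : ∀ j : Fin (n + 1), (I : ℕ) < (j : ℕ) → j ≤ k →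
          ∑ t ∈ Finset.Icc j k, v t = ∑ t ∈ Finset.Icc j k, u t := by
        intro j hjgt hj
        refine (sum_off Hoff (fun t ht => ?_)).symm
        rw [Finset.mem_Icc] at ht
        have ht1 : (j : ℕ) ≤ (t : ℕ) := ht.1
        constructor <;> (simp only [ne_eq, Fin.ext_iff]; omega)
      constructor
      · rintro ⟨hv1, hv2⟩
        refine ⟨by rw [← hvk, hv1], ?_⟩
        intro j hj
        have hje : (j : ℕ) ≤ (k : ℕ) := hj
        have htrij : (j : ℕ) ≤ (i : ℕ) ∨ (j : ℕ) = (I : ℕ) ∨ (I : ℕ) < (j : ℕ) := by omega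
        rcases htrij with hji | hjI | hjh
        · rw [← keylow j hji]; exact hv2 j hj
        · have hjeq : j = I := Fin.ext hjI
          rw [hjeq, sum_split_I1 h1 hIk u, filter_icc_eq_I1 h1, huI,
            ← filter_icc_jsucc h1 hJ, sum_off Hoff ?_]
          · have := hv2 J hJk
            omega
          · intro t ht
            rw [Finset.mem_Icc] at ht
            have ht1 : (J : ℕ) ≤ (t : ℕ) := ht.1
            constructor <;> (simp only [ne_eq, Fin.ext_iff]; omega)
        · rw [← keyhigh j hjh hj]; exact hv2 j hj
      · rintro ⟨hu1, hu2⟩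
        refine ⟨by rw [hvk, hu1], ?_⟩
        intro j hj
        have hje : (j : ℕ) ≤ (k : ℕ) := hj
        have htrij : (j : ℕ) ≤ (i : ℕ) ∨ (j : ℕ) = (I : ℕ) ∨ (I : ℕ) < (j : ℕ) := by omega
        rcases htrij with hji | hjI | hjh
        · rw [keylow j hji]; exact hu2 j hj
        · have hjeq : j = I := Fin.ext hjI
          have hx := hu2 i hik
          rw [sum_split2 h1 le_rfl hIk u] at hx
          rw [hjeq, sum_split_I1 h1 hIk v, filter_icc_eq_I1 h1, hFeq, hvI]
          omega
        · rw [keyhigh j hjh hj]; exact hu2 j hj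

/-- Transfer of the maximum along the partial swap `i ↔ I` (predicate version). -/
lemma max_swap' {P P' : Fin (n + 1) → Prop} (h1 : (I : ℕ) = (i : ℕ) + 1)
    (hmem : ∀ k, P' k ↔ P (if k = i then I else if k = I then i else k))
    {M : Fin (n + 1)} (hM1 : P M) (hM2 : ∀ y, P y → y ≤ M) (hnot : ¬ P i ∨ ¬ P I) :
    P' (if M = i then I else if M = I then i else M) ∧
      ∀ y, P' y → y ≤ (if M = i then I else if M = I then i else M) := by
  have hiI : i ≠ I := by simp only [ne_eq, Fin.ext_iff]; omega
  constructor
  · rw [hmem]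
    by_cases hMi : M = i
    · rw [if_pos hMi, if_neg (Ne.symm hiI), if_pos rfl, ← hMi]; exact hM1
    · by_cases hMI : M = I
      · rw [if_neg hMi, if_pos hMI, if_pos rfl, ← hMI]; exact hM1
      · rw [if_neg hMi, if_neg hMI, if_neg hMi, if_neg hMI]; exact hM1
  · intro y hy
    have hyT := (hmem y).mp hy
    by_cases hMi : M = i
    · rw [if_pos hMi, Fin.le_def]
      by_cases hyi : y = i
      · rw [hyi]; omega
      · by_cases hyI : y = I
        · rw [hyI]
        · rw [if_neg hyi, if_neg hyI] at hyT
          have h' : (y : ℕ) ≤ (M : ℕ) := hM2 y hyT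
          have h'' : (M : ℕ) = (i : ℕ) := by rw [hMi]
          omega
    · by_cases hMI : M = I
      · have hiT : ¬ P i := by
          rcases hnot with h' | h'
          · exact h'
          · exact absurd (hMI ▸ hM1) h'
        rw [if_neg hMi, if_pos hMI, Fin.le_def]
        by_cases hyi : y = i
        · rw [hyi]
        · by_cases hyI : y = I
          · rw [if_neg hyi, if_pos hyI] at hyT
            exact absurd hyT hiT
          · rw [if_neg hyi, if_neg hyI] at hyT
            have h' : (y : ℕ) ≤ (M : ℕ) := hM2 y hyT
            have h'' : (M : ℕ) = (I : ℕ) := by rw [hMI]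
            have h3 : (y : ℕ) ≠ (I : ℕ) := fun h => hyI (Fin.ext h)
            omega
      · rw [if_neg hMi, if_neg hMI, Fin.le_def]
        by_cases hyi : y = i
        · rw [if_pos hyi] at hyT
          have := hM2 I hyT
          have h' : (I : ℕ) ≤ (M : ℕ) := this
          rw [hyi]; omega
        · by_cases hyI : y = I
          · rw [if_neg hyi, if_pos hyI] at hyT
            have h' : (i : ℕ) ≤ (M : ℕ) := hM2 i hyT
            have h'' : (M : ℕ) ≠ (i : ℕ) := fun h => hMi (Fin.ext h)
            rw [hyI]; omega
          · rw [if_neg hyi, if_neg hyI] at hyT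
            exact hM2 y hyT

lemma tau_invol {i I : Fin (n + 1)} (h1 : (I : ℕ) = (i : ℕ) + 1) (k : Fin (n + 1)) :
    (if (if k = i then I else if k = I then i else k) = i then I
      else if (if k = i then I else if k = I then i else k) = I then i
      else (if k = i then I else if k = I then i else k)) = k := by
  have hiI : i ≠ I := by simp only [ne_eq, Fin.ext_iff]; omega
  by_cases hki : k = i
  · rw [if_pos hki, if_neg (Ne.symm hiI), if_pos rfl, hki]
  · by_cases hkI : k = I
    · rw [if_neg hki, if_pos hkI, if_pos rfl, hkI]
    · rw [if_neg hki, if_neg hkI, if_neg hki, if_neg hkI]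

end WordLemmas

section Layer2
variable {p : ℕ} {r : ZMod p}

lemma sig_cases (pb : Fin (n + 1) → ZMod 2) (l : Fin (n + 1) → ℤ) (k : Fin (n + 1)) :
    sig pb p r l k = 1 ∨ sig pb p r l k = 0 ∨ sig pb p r l k = -1 := by
  unfold sig; split_ifs <;> simp

lemma nP_eq (pb : Fin (n + 1) → ZMod 2) (l : Fin (n + 1) → ℤ) (j k : Fin (n + 1)) :
    nP pb p r l j k = ((Finset.Icc j k).filter (fun t => sig pb p r l t = 1)).card := by
  rw [nP, show {x : Fin (n+1) | x ∈ Finset.Icc j k ∧ sig pb p r l x = 1}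
      = ((Finset.Icc j k).filter (fun t => sig pb p r l t = 1) : Finset (Fin (n+1))) from ?_,
    Set.ncard_coe_finset]
  ext x
  simp [Finset.mem_filter]

lemma nM_eq (pb : Fin (n + 1) → ZMod 2) (l : Fin (n + 1) → ℤ) (j k : Fin (n + 1)) :
    nM pb p r l j k = ((Finset.Icc j k).filter (fun t => sig pb p r l t = -1)).card := by
  rw [nM, show {x : Fin (n+1) | x ∈ Finset.Icc j k ∧ sig pb p r l x = -1}
      = ((Finset.Icc j k).filter (fun t => sig pb p r l t = -1) : Finset (Fin (n+1))) from ?_,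
    Set.ncard_coe_finset]
  ext x
  simp [Finset.mem_filter]

lemma sum_sig (pb : Fin (n + 1) → ZMod 2) (l : Fin (n + 1) → ℤ) (j k : Fin (n + 1)) :
    ∑ t ∈ Finset.Icc j k, sig pb p r l t
      = (nP pb p r l j k : ℤ) - (nM pb p r l j k : ℤ) := by
  rw [nP_eq, nM_eq, Finset.card_filter, Finset.card_filter]
  push_cast
  rw [← Finset.sum_sub_distrib]
  refine Finset.sum_congr rfl fun t _ => ?_
  rcases sig_cases pb l t (r := r) with h | h | h <;> rw [h] <;> norm_num

lemma rplus_iff_rpw (pb : Fin (n + 1) → ZMod 2) (l : Fin (n + 1) → ℤ) (k : Fin (n + 1)) :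
    RPlus pb p r l k ↔ RPW (sig pb p r l) k := by
  unfold RPlus RPW
  refine and_congr_right fun _ => forall_congr' fun j => imp_congr_right fun _ => ?_
  rw [sum_sig]
  omega

lemma fStar_eq_some {pb : Fin (n + 1) → ZMod 2} {l : Fin (n + 1) → ℤ} {k : Fin (n + 1)}
    (hk : RPlus pb p r l k) (hmax : ∀ y, RPlus pb p r l y → y ≤ k) :
    fStar pb p r l = some (l + eps k) := by
  classical
  rw [fStar]
  split_ifs with h
  · have hmem : k ∈ Finset.univ.filter (RPlus pb p r l) :=
      Finset.mem_filter.mpr ⟨Finset.mem_univ _, hk⟩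
    have : (Finset.univ.filter (RPlus pb p r l)).max' h = k :=
      le_antisymm
        (Finset.max'_le _ _ _ fun y hy => hmax y (Finset.mem_filter.mp hy).2)
        (Finset.le_max' _ _ hmem)
    rw [this]
  · exact absurd ⟨k, Finset.mem_filter.mpr ⟨Finset.mem_univ _, hk⟩⟩ h

lemma fStar_eq_none_iff {pb : Fin (n + 1) → ZMod 2} {l : Fin (n + 1) → ℤ} :
    fStar pb p r l = none ↔ ∀ k, ¬ RPlus pb p r l k := by
  classical
  rw [fStar]
  split_ifs with h
  · refine iff_of_false (by simp) ?_
    obtain ⟨k, hk⟩ := h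
    intro hall
    exact hall k (Finset.mem_filter.mp hk).2
  · refine iff_of_true rfl fun k hk =>
      h ⟨k, Finset.mem_filter.mpr ⟨Finset.mem_univ _, hk⟩⟩

lemma sig_eq_one_of {pb : Fin (n + 1) → ZMod 2} {l : Fin (n + 1) → ℤ} {k : Fin (n + 1)}
    (h : ((res pb (l + eps k) k : ℤ) : ZMod p) = r) : sig pb p r l k = 1 := by
  unfold sig; rw [if_pos h]

lemma sig_eq_neg_of {pb : Fin (n + 1) → ZMod 2} {l : Fin (n + 1) → ℤ} {k : Fin (n + 1)}
    (hn : ((res pb (l + eps k) k : ℤ) : ZMod p) ≠ r)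
    (h : ((res pb l k : ℤ) : ZMod p) = r) : sig pb p r l k = -1 := by
  unfold sig; rw [if_neg hn, if_pos h]

lemma sig_eq_zero_of {pb : Fin (n + 1) → ZMod 2} {l : Fin (n + 1) → ℤ} {k : Fin (n + 1)}
    (hn : ((res pb (l + eps k) k : ℤ) : ZMod p) ≠ r)
    (hn' : ((res pb l k : ℤ) : ZMod p) ≠ r) : sig pb p r l k = 0 := by
  unfold sig; rw [if_neg hn, if_neg hn']

lemma sig_eq_of_res {pb1 pb2 : Fin (n + 1) → ZMod 2} {l1 l2 : Fin (n + 1) → ℤ}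
    {k1 k2 : Fin (n + 1)}
    (hplus : res pb1 (l1 + eps k1) k1 = res pb2 (l2 + eps k2) k2)
    (hminus : res pb1 l1 k1 = res pb2 l2 k2) :
    sig pb1 p r l1 k1 = sig pb2 p r l2 k2 := by
  unfold sig; rw [hplus, hminus]

end Layer2

section Layer3

variable {i I : Fin (n + 1)}

lemma sg_sq (pb : Fin (n + 1) → ZMod 2) (j : Fin (n + 1)) : sg pb j * sg pb j = 1 := by
  unfold sg; split_ifs <;> norm_num

lemma sg_pm (pb : Fin (n + 1) → ZMod 2) (j : Fin (n + 1)) : sg pb j = 1 ∨ sg pb j = -1 := by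
  unfold sg; split_ifs <;> simp

lemma sg_opp {pb : Fin (n + 1) → ZMod 2} (hpar : pb i + pb I = 1) :
    sg pb I = - sg pb i := by
  have h2 : ∀ x : ZMod 2, x = 0 ∨ x = 1 := by decide
  unfold sg
  rcases h2 (pb i) with h | h <;> rcases h2 (pb I) with h' | h' <;>
    rw [h, h'] at hpar ⊢ <;> first
      | (exfalso; revert hpar; decide)
      | norm_num

lemma pbSwap_at_i (pb : Fin (n + 1) → ZMod 2) : pbSwap pb i i = pb (i + 1) := by
  unfold pbSwap; rw [if_pos rfl]

lemma pbSwap_at_I (pb : Fin (n + 1) → ZMod 2) (h : i + 1 ≠ i) :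
    pbSwap pb i (i + 1) = pb i := by
  unfold pbSwap; rw [if_neg h, if_pos rfl]

lemma pbSwap_off (pb : Fin (n + 1) → ZMod 2) {k : Fin (n + 1)} (h : k ≠ i) (h' : k ≠ i + 1) :
    pbSwap pb i k = pb k := by
  unfold pbSwap; rw [if_neg h, if_neg h']

lemma sg_pbSwap_at_i (pb : Fin (n + 1) → ZMod 2) : sg (pbSwap pb i) i = sg pb (i + 1) := by
  unfold sg; rw [pbSwap_at_i]

lemma sg_pbSwap_at_I (pb : Fin (n + 1) → ZMod 2) (h : i + 1 ≠ i) :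
    sg (pbSwap pb i) (i + 1) = sg pb i := by
  unfold sg; rw [pbSwap_at_I pb h]

lemma sg_pbSwap_off (pb : Fin (n + 1) → ZMod 2) {k : Fin (n + 1)} (h : k ≠ i) (h' : k ≠ i + 1) :
    sg (pbSwap pb i) k = sg pb k := by
  unfold sg; rw [pbSwap_off pb h h']

end Layer3

section Layer4
variable {i I : Fin (n + 1)}

lemma ioi_insert (h1 : (I : ℕ) = (i : ℕ) + 1) :
    Finset.Ioi i = insert I (Finset.Ioi I) := by
  ext t
  simp only [Finset.mem_Ioi, Finset.mem_insert, Fin.lt_def, Fin.ext_iff]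
  omega

lemma ioi_split2 {j : Fin (n + 1)} (h1 : (I : ℕ) = (i : ℕ) + 1) (hj : (j : ℕ) < (i : ℕ)) :
    Finset.Ioi j = insert i (insert I ((Finset.Ioi j).filter (fun t => t ≠ i ∧ t ≠ I))) := by
  ext t
  simp only [Finset.mem_Ioi, Finset.mem_insert, Finset.mem_filter, Fin.lt_def, Fin.ext_iff, ne_eq]
  omega

lemma sum_ioi_split2 {j : Fin (n + 1)} (h1 : (I : ℕ) = (i : ℕ) + 1) (hj : (j : ℕ) < (i : ℕ))
    (w : Fin (n + 1) → ℤ) :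
    ∑ t ∈ Finset.Ioi j, w t =
      w i + w I + ∑ t ∈ (Finset.Ioi j).filter (fun t => t ≠ i ∧ t ≠ I), w t := by
  conv_lhs => rw [ioi_split2 h1 hj]
  rw [Finset.sum_insert, Finset.sum_insert]
  · ring
  · simp only [Finset.mem_filter, ne_eq]; tauto
  · simp only [Finset.mem_insert, Finset.mem_filter, Finset.mem_Ioi, Fin.lt_def, ne_eq,
      Fin.ext_iff, not_true, false_and, and_false, or_false]
    omega

/-- `ϑ` is unchanged away from `i, i+1` by the parity swap. -/
lemma theta_pbSwap_off (pb : Fin (n + 1) → ZMod 2) (h1 : (I : ℕ) = (i : ℕ) + 1) (hI : I = i + 1)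
    {j : Fin (n + 1)} (hji : j ≠ i) (hjI : j ≠ I) :
    theta (pbSwap pb i) j = theta pb j := by
  have hsgj : sg (pbSwap pb i) j = sg pb j := sg_pbSwap_off pb hji (hI ▸ hjI)
  unfold theta
  rw [← Finset.sum_mul, ← Finset.sum_mul, hsgj]
  congr 1
  have htri : (j : ℕ) < (i : ℕ) ∨ (I : ℕ) < (j : ℕ) := by
    have h2 : (j : ℕ) ≠ (i : ℕ) := fun h => hji (Fin.ext h)
    have h3 : (j : ℕ) ≠ (I : ℕ) := fun h => hjI (Fin.ext h)
    omega
  rcases htri with hlow | hhigh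
  · rw [sum_ioi_split2 h1 hlow (sg (pbSwap pb i)), sum_ioi_split2 h1 hlow (sg pb)]
    have e1 : sg (pbSwap pb i) i = sg pb I := by rw [sg_pbSwap_at_i pb, hI]
    have e2 : sg (pbSwap pb i) I = sg pb i := by
      rw [hI]; exact sg_pbSwap_at_I pb (by rw [← hI]; simp only [ne_eq, Fin.ext_iff]; omega)
    have e3 : ∑ t ∈ (Finset.Ioi j).filter (fun t => t ≠ i ∧ t ≠ I), sg (pbSwap pb i) t
        = ∑ t ∈ (Finset.Ioi j).filter (fun t => t ≠ i ∧ t ≠ I), sg pb t := by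
      refine Finset.sum_congr rfl fun t ht => ?_
      obtain ⟨-, ht1, ht2⟩ := Finset.mem_filter.mp ht
      exact sg_pbSwap_off pb ht1 (hI ▸ ht2)
    rw [e1, e2, e3]; ring
  · refine Finset.sum_congr rfl fun t ht => ?_
    rw [Finset.mem_Ioi, Fin.lt_def] at ht
    refine sg_pbSwap_off pb ?_ ?_ <;> (rw [← hI] at * <;> simp only [ne_eq, Fin.ext_iff]) <;> omega

lemma res_congr (pb : Fin (n + 1) → ZMod 2) {l l' : Fin (n + 1) → ℤ} (k : Fin (n + 1))
    (h : l k = l' k) : res pb l k = res pb l' k := by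
  unfold res; rw [h]

/-- Residue of a vector at `i`, in terms of `a = sg pb i` and `S`. -/
lemma res_at_i (pb : Fin (n + 1) → ZMod 2) (h1 : (I : ℕ) = (i : ℕ) + 1) (hI : I = i + 1)
    (hb : sg pb I = - sg pb i) (m : Fin (n + 1) → ℤ) :
    res pb m i = sg pb i * m i - sg pb i + ∑ k ∈ Finset.Ioi I, sg pb k := by
  unfold res theta
  rw [← Finset.sum_mul, ioi_insert h1,
    Finset.sum_insert (by simp only [Finset.mem_Ioi]; exact lt_irrefl I), hb]
  have h2 := sg_sq pb i
  linear_combination ((∑ k ∈ Finset.Ioi I, sg pb k) - sg pb i) * h2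

lemma res_at_I (pb : Fin (n + 1) → ZMod 2) (h1 : (I : ℕ) = (i : ℕ) + 1) (hI : I = i + 1)
    (hb : sg pb I = - sg pb i) (m : Fin (n + 1) → ℤ) :
    res pb m I = - sg pb i * m I + ∑ k ∈ Finset.Ioi I, sg pb k := by
  unfold res theta
  rw [← Finset.sum_mul, hb]
  have h2 := sg_sq pb i
  linear_combination (∑ k ∈ Finset.Ioi I, sg pb k) * h2

lemma sum_sg_swap (pb : Fin (n + 1) → ZMod 2) (h1 : (I : ℕ) = (i : ℕ) + 1) (hI : I = i + 1) :
    ∑ k ∈ Finset.Ioi I, sg (pbSwap pb i) k = ∑ k ∈ Finset.Ioi I, sg pb k := by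
  refine Finset.sum_congr rfl fun t ht => ?_
  rw [Finset.mem_Ioi, Fin.lt_def] at ht
  refine sg_pbSwap_off pb ?_ ?_ <;> rw [← hI] at * <;> simp only [ne_eq, Fin.ext_iff] <;> omega

lemma res'_at_i (pb : Fin (n + 1) → ZMod 2) (h1 : (I : ℕ) = (i : ℕ) + 1) (hI : I = i + 1)
    (hb : sg pb I = - sg pb i) (m : Fin (n + 1) → ℤ) :
    res (pbSwap pb i) m i = - sg pb i * m i + sg pb i + ∑ k ∈ Finset.Ioi I, sg pb k := by
  have hSS := sum_sg_swap pb h1 hI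
  subst hI
  have hne : i + 1 ≠ i := by simp only [ne_eq, Fin.ext_iff]; omega
  have hb' : sg (pbSwap pb i) (i + 1) = - sg (pbSwap pb i) i := by
    rw [sg_pbSwap_at_I pb hne, sg_pbSwap_at_i pb, hb]; ring
  rw [res_at_i (pbSwap pb i) h1 rfl hb', sg_pbSwap_at_i pb, hb, hSS]
  ring

lemma res'_at_I (pb : Fin (n + 1) → ZMod 2) (h1 : (I : ℕ) = (i : ℕ) + 1) (hI : I = i + 1)
    (hb : sg pb I = - sg pb i) (m : Fin (n + 1) → ℤ) :
    res (pbSwap pb i) m I = sg pb i * m I + ∑ k ∈ Finset.Ioi I, sg pb k := by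
  have hSS := sum_sg_swap pb h1 hI
  subst hI
  have hne : i + 1 ≠ i := by simp only [ne_eq, Fin.ext_iff]; omega
  have hb' : sg (pbSwap pb i) (i + 1) = - sg (pbSwap pb i) i := by
    rw [sg_pbSwap_at_I pb hne, sg_pbSwap_at_i pb, hb]; ring
  rw [res_at_I (pbSwap pb i) h1 rfl hb', sg_pbSwap_at_i pb, hb, hSS]
  ring

end Layer4

section Layer5
variable {i I : Fin (n + 1)} {p : ℕ} {r : ZMod p}

lemma res_at_i_eps (pb : Fin (n + 1) → ZMod 2) (h1 : (I : ℕ) = (i : ℕ) + 1) (hI : I = i + 1)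
    (hb : sg pb I = - sg pb i) (m : Fin (n + 1) → ℤ) :
    res pb (m + eps i) i = sg pb i * m i + ∑ k ∈ Finset.Ioi I, sg pb k := by
  rw [res_at_i pb h1 hI hb]
  simp only [Pi.add_apply, eps, if_pos rfl, eq_self_iff_true, if_true]
  ring

lemma res_at_I_eps (pb : Fin (n + 1) → ZMod 2) (h1 : (I : ℕ) = (i : ℕ) + 1) (hI : I = i + 1)
    (hb : sg pb I = - sg pb i) (m : Fin (n + 1) → ℤ) :
    res pb (m + eps I) I = - sg pb i * m I - sg pb i + ∑ k ∈ Finset.Ioi I, sg pb k := by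
  rw [res_at_I pb h1 hI hb]
  simp only [Pi.add_apply, eps, if_pos rfl, eq_self_iff_true, if_true]
  ring

lemma res'_at_i_eps (pb : Fin (n + 1) → ZMod 2) (h1 : (I : ℕ) = (i : ℕ) + 1) (hI : I = i + 1)
    (hb : sg pb I = - sg pb i) (m : Fin (n + 1) → ℤ) :
    res (pbSwap pb i) (m + eps i) i = - sg pb i * m i + ∑ k ∈ Finset.Ioi I, sg pb k := by
  rw [res'_at_i pb h1 hI hb]
  simp only [Pi.add_apply, eps, if_pos rfl, eq_self_iff_true, if_true]
  ring

lemma res'_at_I_eps (pb : Fin (n + 1) → ZMod 2) (h1 : (I : ℕ) = (i : ℕ) + 1) (hI : I = i + 1)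
    (hb : sg pb I = - sg pb i) (m : Fin (n + 1) → ℤ) :
    res (pbSwap pb i) (m + eps I) I
      = sg pb i * m I + sg pb i + ∑ k ∈ Finset.Ioi I, sg pb k := by
  rw [res'_at_I pb h1 hI hb]
  simp only [Pi.add_apply, eps, if_pos rfl, eq_self_iff_true, if_true]
  ring

lemma res_pbSwap_off (pb : Fin (n + 1) → ZMod 2) (h1 : (I : ℕ) = (i : ℕ) + 1) (hI : I = i + 1)
    {k : Fin (n + 1)} (hk : k ≠ i) (hk' : k ≠ I) (m : Fin (n + 1) → ℤ) :
    res (pbSwap pb i) m k = res pb m k := by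
  unfold res
  rw [sg_pbSwap_off pb hk (hI ▸ hk'), theta_pbSwap_off pb h1 hI hk hk']

lemma swapL_apply_i (l : Fin (n + 1) → ℤ) : swapL i l i = l (i + 1) := by
  unfold swapL; rw [if_pos rfl]

lemma swapL_apply_I (l : Fin (n + 1) → ℤ) (hne : i + 1 ≠ i) : swapL i l (i + 1) = l i := by
  unfold swapL; rw [if_neg hne, if_pos rfl]

lemma swapL_apply_off (l : Fin (n + 1) → ℤ) {k : Fin (n + 1)} (hk : k ≠ i) (hk' : k ≠ i + 1) :
    swapL i l k = l k := by
  unfold swapL; rw [if_neg hk, if_neg hk']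

lemma sI_apply_off (pb : Fin (n + 1) → ZMod 2) (l : Fin (n + 1) → ℤ)
    {k : Fin (n + 1)} (hk : k ≠ i) (hk' : k ≠ i + 1) : sI pb p i l k = l k := by
  unfold sI
  split_ifs with h
  · exact swapL_apply_off l hk hk'
  · simp only [Pi.sub_apply, Pi.add_apply, eps, if_neg hk, if_neg hk']
    rw [swapL_apply_off l hk hk']
    ring

lemma sig_sI_off (pb : Fin (n + 1) → ZMod 2) (lam : Fin (n + 1) → ℤ)
    (h1 : (I : ℕ) = (i : ℕ) + 1) (hI : I = i + 1)
    {k : Fin (n + 1)} (hk : k ≠ i) (hk' : k ≠ I) :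
    sig pb p r lam k = sig (pbSwap pb i) p r (sI pb p i lam) k := by
  refine (sig_eq_of_res ?_ ?_).symm
  · rw [res_pbSwap_off pb h1 hI hk hk']
    refine res_congr pb k ?_
    simp only [Pi.add_apply, eps, if_pos rfl, eq_self_iff_true, if_true]
    rw [sI_apply_off pb lam hk (hI ▸ hk')]
  · rw [res_pbSwap_off pb h1 hI hk hk']
    exact res_congr pb k (sI_apply_off pb lam hk (hI ▸ hk'))

lemma sI_of_zero (pb : Fin (n + 1) → ZMod 2) (l : Fin (n + 1) → ℤ)
    (hc : ((sg pb i * l i - sg pb (i + 1) * l (i + 1) : ℤ) : ZMod p) = 0) :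
    sI pb p i l = swapL i l := by
  unfold sI; rw [if_pos hc]

lemma sI_of_ne (pb : Fin (n + 1) → ZMod 2) (l : Fin (n + 1) → ℤ)
    (hc : ((sg pb i * l i - sg pb (i + 1) * l (i + 1) : ℤ) : ZMod p) ≠ 0) :
    sI pb p i l = swapL i l + eps i - eps (i + 1) := by
  unfold sI; rw [if_neg hc]

lemma swapL_add_eps_off (l : Fin (n + 1) → ℤ) {k : Fin (n + 1)} (hk : k ≠ i) (hk' : k ≠ i + 1) :
    swapL i (l + eps k) = swapL i l + eps k := by
  funext t
  simp only [swapL, Pi.add_apply, eps]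
  split_ifs with h h' h'' <;> first | rfl | (exfalso; first
    | exact hk (by rw [← h, h'']) | exact hk' (by rw [← h', h'']) | omega)

lemma swapL_add_eps_i (l : Fin (n + 1) → ℤ) (hne : i + 1 ≠ i) :
    swapL i (l + eps i) = swapL i l + eps (i + 1) := by
  funext t
  simp only [swapL, Pi.add_apply, eps]
  split_ifs with h h' h'' <;> first | rfl | omega | (exfalso; first
    | exact hne (by rw [← h', h]) | exact hne (by rw [h'', h]))

lemma swapL_add_eps_I (l : Fin (n + 1) → ℤ) (hne : i + 1 ≠ i) :
    swapL i (l + eps (i + 1)) = swapL i l + eps i := by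
  funext t
  simp only [swapL, Pi.add_apply, eps]
  split_ifs with h h' h'' <;> first | rfl | omega | (exfalso; first
    | exact hne (by rw [← h', h]) | exact hne (by rw [h'', h]))

end Layer5

section Layer2b
variable {p : ℕ} {r : ZMod p}

lemma sig_eq_one_iff {pb : Fin (n + 1) → ZMod 2} {l : Fin (n + 1) → ℤ} {k : Fin (n + 1)} :
    sig pb p r l k = 1 ↔ ((res pb (l + eps k) k : ℤ) : ZMod p) = r := by
  unfold sig
  split_ifs with h h'
  · exact iff_of_true rfl h
  · exact iff_of_false (by norm_num) h
  · exact iff_of_false (by norm_num) h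

lemma sig_eq_neg_iff {pb : Fin (n + 1) → ZMod 2} {l : Fin (n + 1) → ℤ} {k : Fin (n + 1)} :
    sig pb p r l k = -1 ↔
      (((res pb (l + eps k) k : ℤ) : ZMod p) ≠ r ∧ ((res pb l k : ℤ) : ZMod p) = r) := by
  unfold sig
  split_ifs with h h'
  · exact iff_of_false (by norm_num) (fun hx => hx.1 h)
  · exact iff_of_true rfl ⟨h, h'⟩
  · exact iff_of_false (by norm_num) (fun hx => h' hx.2)

lemma not_rplus_of_sig_ne {pb : Fin (n + 1) → ZMod 2} {l : Fin (n + 1) → ℤ} {k : Fin (n + 1)}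
    (h : sig pb p r l k ≠ 1) : ¬ RPlus pb p r l k := fun hR => h hR.1

end Layer2b



set_option maxHeartbeats 1600000 in
/-- `s_i(f̃*_r(λ)) = f̃*′_r(s_i(λ))` (with `s_i(0) = 0`); in particular
`f̃*_r(λ) ≠ 0` iff `f̃*′_r(s_i(λ)) ≠ 0`. -/
theorem statement18 (p : ℕ) (hp : p = 0 ∨ p.Prime) (pb : Fin (n + 1) → ZMod 2)
    (i : Fin (n + 1)) (hi : (i : ℕ) < n) (hpar : pb i + pb (i + 1) = 1)
    (lam : Fin (n + 1) → ℤ) (r : ZMod p) :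
    Option.map (sI pb p i) (fStar pb p r lam) = fStar (pbSwap pb i) p r (sI pb p i lam) ∧
      (fStar pb p r lam ≠ none ↔ fStar (pbSwap pb i) p r (sI pb p i lam) ≠ none) := by
  classical
  have h1 : ((i + 1 : Fin (n + 1)) : ℕ) = (i : ℕ) + 1 := val_add_one hi
  set I : Fin (n + 1) := i + 1 with hIdef
  have hI : I = i + 1 := hIdef
  have h1' : (I : ℕ) = (i : ℕ) + 1 := h1
  have hne1 : I ≠ i := by simp only [ne_eq, Fin.ext_iff]; omega
  have hb : sg pb I = - sg pb i := sg_opp hpar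
  have ha2 : sg pb i * sg pb i = 1 := sg_sq pb i
  haveI : Nontrivial (ZMod p) := by
    rcases hp with h | h
    · subst h; exact inferInstanceAs (Nontrivial ℤ)
    · haveI := Fact.mk h; infer_instance
  have haz : ((sg pb i : ℤ) : ZMod p) ≠ 0 := by
    rcases sg_pm pb i with h | h <;> rw [h]
    · exact_mod_cast (one_ne_zero : (1 : ZMod p) ≠ 0)
    · intro h0
      rw [Int.cast_neg, Int.cast_one, neg_eq_zero] at h0
      exact (one_ne_zero : (1 : ZMod p) ≠ 0) h0
  have Hoff : ∀ k, k ≠ i → k ≠ I →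
      sig pb p r lam k = sig (pbSwap pb i) p r (sI pb p i lam) k :=
    fun k hk hk' => sig_sI_off pb lam h1' hI hk hk'
  set a : ℤ := sg pb i with ha
  set S : ℤ := ∑ k ∈ Finset.Ioi I, sg pb k with hS
  have e1 : res pb (lam + eps i) i = a * lam i + S := res_at_i_eps pb h1' hI hb lam
  have e2 : res pb lam i = a * lam i - a + S := res_at_i pb h1' hI hb lam
  have e3 : res pb (lam + eps I) I = - a * lam I - a + S := res_at_I_eps pb h1' hI hb lam
  have e4 : res pb lam I = - a * lam I + S := res_at_I pb h1' hI hb lam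
  have buildmax : (∃ k, RPlus pb p r lam k) →
      ∃ M, RPlus pb p r lam M ∧ ∀ y, RPlus pb p r lam y → y ≤ M := by
    rintro ⟨k, hk⟩
    have hne : (Finset.univ.filter (RPlus pb p r lam)).Nonempty :=
      ⟨k, Finset.mem_filter.mpr ⟨Finset.mem_univ _, hk⟩⟩
    exact ⟨_, (Finset.mem_filter.mp (Finset.max'_mem _ hne)).2,
      fun y hy => Finset.le_max' _ _ (Finset.mem_filter.mpr ⟨Finset.mem_univ _, hy⟩)⟩
  have assembleEq :
      (∀ k, RPW (sig (pbSwap pb i) p r (sI pb p i lam)) k ↔ RPW (sig pb p r lam) k) →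
      (∀ M, RPlus pb p r lam M → (∀ y, RPlus pb p r lam y → y ≤ M) →
        sI pb p i (lam + eps M) = sI pb p i lam + eps M) →
      Option.map (sI pb p i) (fStar pb p r lam) = fStar (pbSwap pb i) p r (sI pb p i lam) := by
    intro hmem hsI
    have hiff : ∀ k, RPlus (pbSwap pb i) p r (sI pb p i lam) k ↔ RPlus pb p r lam k := by
      intro k
      rw [rplus_iff_rpw, rplus_iff_rpw]
      exact hmem k
    by_cases hex : ∃ k, RPlus pb p r lam k
    · obtain ⟨M, hM1, hM2⟩ := buildmax hex
      rw [fStar_eq_some hM1 hM2,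
        fStar_eq_some ((hiff M).mpr hM1) (fun y hy => hM2 y ((hiff y).mp hy)),
        Option.map_some, hsI M hM1 hM2]
    · push_neg at hex
      rw [fStar_eq_none_iff.mpr hex,
        fStar_eq_none_iff.mpr (fun k hk => hex k ((hiff k).mp hk))]
      rfl
  have assembleSwap :
      (∀ k, RPW (sig (pbSwap pb i) p r (sI pb p i lam)) k
          ↔ RPW (sig pb p r lam) (if k = i then I else if k = I then i else k)) →
      (¬ RPlus pb p r lam i ∨ ¬ RPlus pb p r lam I) →
      (∀ M, RPlus pb p r lam M → (∀ y, RPlus pb p r lam y → y ≤ M) →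
        sI pb p i (lam + eps M)
          = sI pb p i lam + eps (if M = i then I else if M = I then i else M)) →
      Option.map (sI pb p i) (fStar pb p r lam) = fStar (pbSwap pb i) p r (sI pb p i lam) := by
    intro hmem hnot hsI
    have hiff : ∀ k, RPlus (pbSwap pb i) p r (sI pb p i lam) k
        ↔ RPlus pb p r lam (if k = i then I else if k = I then i else k) := by
      intro k; rw [rplus_iff_rpw, rplus_iff_rpw]; exact hmem k
    by_cases hex : ∃ k, RPlus pb p r lam k
    · obtain ⟨M, hM1, hM2⟩ := buildmax hex
      obtain ⟨hN1, hN2⟩ := max_swap' h1' hiff hM1 hM2 hnot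
      rw [fStar_eq_some hM1 hM2, fStar_eq_some hN1 hN2, Option.map_some, hsI M hM1 hM2]
    · push_neg at hex
      rw [fStar_eq_none_iff.mpr hex,
        fStar_eq_none_iff.mpr (fun k hk => hex _ ((hiff k).mp hk))]
      rfl
  have hsI_off : ∀ M : Fin (n + 1), M ≠ i → M ≠ I →
      sI pb p i (lam + eps M) = sI pb p i lam + eps M := by
    intro M hMi hMI
    have hvi : (lam + eps M) i = lam i := by
      simp only [Pi.add_apply, eps, if_neg (Ne.symm hMi), add_zero]
    have hvI : (lam + eps M) (i + 1) = lam (i + 1) := by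
      have : i + 1 ≠ M := by rw [← hI]; exact Ne.symm hMI
      simp only [Pi.add_apply, eps, if_neg this, add_zero]
    have hMI' : M ≠ i + 1 := by rw [← hI]; exact hMI
    by_cases hc0 : ((sg pb i * lam i - sg pb (i + 1) * lam (i + 1) : ℤ) : ZMod p) = 0
    · rw [sI_of_zero pb lam hc0, sI_of_zero pb _ (by rw [hvi, hvI]; exact hc0),
        swapL_add_eps_off lam hMi hMI']
    · rw [sI_of_ne pb lam hc0, sI_of_ne pb _ (by rw [hvi, hvI]; exact hc0),
        swapL_add_eps_off lam hMi hMI']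
      abel
  have hmain : Option.map (sI pb p i) (fStar pb p r lam)
      = fStar (pbSwap pb i) p r (sI pb p i lam) := by
    by_cases hc : ((sg pb i * lam i - sg pb (i + 1) * lam (i + 1) : ℤ) : ZMod p) = 0
    · -- CASE 1 : s_i is the plain swap
      have hmu : sI pb p i lam = swapL i lam := sI_of_zero pb lam hc
      have hmui : (sI pb p i lam) i = lam I := by rw [hmu, swapL_apply_i, ← hI]
      have hmuI : (sI pb p i lam) I = lam i := by
        rw [hmu, hI, swapL_apply_I lam (hI ▸ hne1)]
      have e5 : res (pbSwap pb i) (sI pb p i lam + eps i) i = - a * lam I + S := by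
        rw [res'_at_i_eps pb h1' hI hb (sI pb p i lam), hmui]
      have e6 : res (pbSwap pb i) (sI pb p i lam) i = - a * lam I + a + S := by
        rw [res'_at_i pb h1' hI hb (sI pb p i lam), hmui]
      have e7 : res (pbSwap pb i) (sI pb p i lam + eps I) I = a * lam i + a + S := by
        rw [res'_at_I_eps pb h1' hI hb (sI pb p i lam), hmuI]
      have e8 : res (pbSwap pb i) (sI pb p i lam) I = a * lam i + S := by
        rw [res'_at_I pb h1' hI hb (sI pb p i lam), hmuI]
      have hAB : ((a * lam i : ℤ) : ZMod p) = ((- a * lam I : ℤ) : ZMod p) := by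
        rw [← hI, hb] at hc
        push_cast at hc ⊢
        linear_combination hc
      -- cast versions
      have c3 : ((res pb (lam + eps I) I : ℤ) : ZMod p)
          = ((a * lam i - a + S : ℤ) : ZMod p) := by
        rw [e3]; push_cast; push_cast at hAB; linear_combination hAB.symm
      have c4 : ((res pb lam I : ℤ) : ZMod p) = ((a * lam i + S : ℤ) : ZMod p) := by
        rw [e4]; push_cast; push_cast at hAB; linear_combination hAB.symm
      have c5 : ((res (pbSwap pb i) (sI pb p i lam + eps i) i : ℤ) : ZMod p)
          = ((a * lam i + S : ℤ) : ZMod p) := by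
        rw [e5]; push_cast; push_cast at hAB; linear_combination hAB.symm
      have c6 : ((res (pbSwap pb i) (sI pb p i lam) i : ℤ) : ZMod p)
          = ((a * lam i + a + S : ℤ) : ZMod p) := by
        rw [e6]; push_cast; push_cast at hAB; linear_combination hAB.symm
      by_cases hr : ((a * lam i + S : ℤ) : ZMod p) = r
      · -- sub-case 1a : both words have (+,−) at (i, I)
        have hx12 : ¬ ((a * lam i - a + S : ℤ) : ZMod p) = r := by
          intro h2
          apply haz
          push_cast at hr h2 ⊢
          linear_combination hr - h2
        have hx13 : ¬ ((a * lam i + a + S : ℤ) : ZMod p) = r := by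
          intro h3
          apply haz
          push_cast at hr h3 ⊢
          linear_combination h3 - hr
        have hui : sig pb p r lam i = 1 := sig_eq_one_of (by rw [e1]; exact hr)
        have huI : sig pb p r lam I = -1 :=
          sig_eq_neg_of (by rw [c3]; exact hx12) (by rw [c4]; exact hr)
        have hvi : sig (pbSwap pb i) p r (sI pb p i lam) i = 1 :=
          sig_eq_one_of (by rw [c5]; exact hr)
        have hvI : sig (pbSwap pb i) p r (sI pb p i lam) I = -1 :=
          sig_eq_neg_of (by rw [e7]; exact hx13) (by rw [e8]; exact hr)
        have hweq : sig (pbSwap pb i) p r (sI pb p i lam) = sig pb p r lam := by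
          funext k
          by_cases hki : k = i
          · rw [hki, hvi, hui]
          · by_cases hkI : k = I
            · rw [hkI, hvI, huI]
            · exact (Hoff k hki hkI).symm
        refine assembleEq (fun k => by rw [hweq]) ?_
        intro M hM1 hM2
        by_cases hMi : M = i
        · -- M = i : condition becomes nonzero
          rw [hMi, hmu]
          have hcne : ((sg pb i * (lam + eps i) i
              - sg pb (i + 1) * (lam + eps i) (i + 1) : ℤ) : ZMod p) ≠ 0 := by
            have hvi' : (lam + eps i) i = lam i + 1 := by
              simp only [Pi.add_apply, eps, if_pos rfl, eq_self_iff_true, if_true]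
            have hvI' : (lam + eps i) (i + 1) = lam (i + 1) := by
              have : i + 1 ≠ i := hI ▸ hne1
              simp only [Pi.add_apply, eps, if_neg this, add_zero]
            rw [hvi', hvI']
            intro h0
            apply haz
            push_cast at h0 hc ⊢
            linear_combination h0 - hc
          rw [sI_of_ne pb _ hcne, swapL_add_eps_i lam (hI ▸ hne1)]
          abel
        · by_cases hMI : M = I
          · exfalso
            have := hM1.1
            rw [hMI, huI] at this
            norm_num at this
          · exact (hsI_off M hMi hMI).trans (by rw [hmu])
      · -- sub-case 1b : both words cancel at (i, I)
        have hu_pair : (sig pb p r lam i = -1 ∧ sig pb p r lam I = 1) ∨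
            (sig pb p r lam i = 0 ∧ sig pb p r lam I = 0) := by
          by_cases h2 : ((a * lam i - a + S : ℤ) : ZMod p) = r
          · exact Or.inl ⟨sig_eq_neg_of (by rw [e1]; exact hr) (by rw [e2]; exact h2),
              sig_eq_one_of (by rw [c3]; exact h2)⟩
          · exact Or.inr ⟨sig_eq_zero_of (by rw [e1]; exact hr) (by rw [e2]; exact h2),
              sig_eq_zero_of (by rw [c3]; exact h2) (by rw [c4]; exact hr)⟩
        have hv_pair : (sig (pbSwap pb i) p r (sI pb p i lam) i = -1 ∧
              sig (pbSwap pb i) p r (sI pb p i lam) I = 1) ∨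
            (sig (pbSwap pb i) p r (sI pb p i lam) i = 0 ∧
              sig (pbSwap pb i) p r (sI pb p i lam) I = 0) := by
          by_cases h3 : ((a * lam i + a + S : ℤ) : ZMod p) = r
          · refine Or.inl ⟨sig_eq_neg_of (by rw [c5]; exact hr) (by rw [c6]; exact h3), ?_⟩
            exact sig_eq_one_of (by rw [e7]; exact h3)
          · refine Or.inr ⟨sig_eq_zero_of (by rw [c5]; exact hr) (by rw [c6]; exact h3), ?_⟩
            exact sig_eq_zero_of (by rw [e7]; exact h3) (by rw [e8]; exact hr)
        have hmem := WLcancel h1' Hoff hu_pair hv_pair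
        refine assembleEq hmem ?_
        intro M hM1 hM2
        have hMi : M ≠ i := by
          intro h
          have := hM1.1
          rw [h] at this
          rcases hu_pair with ⟨h', -⟩ | ⟨h', -⟩ <;> omega
        have hMI : M ≠ I := by
          intro h
          have hnR : ¬ RPlus pb p r lam I := by
            rw [rplus_iff_rpw]
            exact rpw_not_at_I h1' hu_pair
          exact hnR (h ▸ hM1)
        exact (hsI_off M hMi hMI).trans (by rw [hmu])
    · -- CASE 2 : s_i is the swap shifted by ε_i − ε_{i+1}
      have hmu : sI pb p i lam = swapL i lam + eps i - eps (i + 1) := sI_of_ne pb lam hc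
      have hii1 : i ≠ i + 1 := by rw [← hI]; exact Ne.symm hne1
      have hmui : (sI pb p i lam) i = lam I + 1 := by
        rw [hmu]
        simp only [Pi.sub_apply, Pi.add_apply, eps, if_pos rfl, eq_self_iff_true, if_true,
          if_neg hii1]
        rw [swapL_apply_i, ← hI]
        ring
      have hmuI : (sI pb p i lam) I = lam i - 1 := by
        rw [hmu, hI]
        simp only [Pi.sub_apply, Pi.add_apply, eps, if_pos rfl, eq_self_iff_true, if_true,
          if_neg (hI ▸ hne1 : i + 1 ≠ i)]
        rw [swapL_apply_I lam (hI ▸ hne1)]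
        ring
      have f5 : res (pbSwap pb i) (sI pb p i lam + eps i) i = - a * lam I - a + S := by
        rw [res'_at_i_eps pb h1' hI hb (sI pb p i lam), hmui]; ring
      have f6 : res (pbSwap pb i) (sI pb p i lam) i = - a * lam I + S := by
        rw [res'_at_i pb h1' hI hb (sI pb p i lam), hmui]; ring
      have f7 : res (pbSwap pb i) (sI pb p i lam + eps I) I = a * lam i + S := by
        rw [res'_at_I_eps pb h1' hI hb (sI pb p i lam), hmuI]; ring
      have f8 : res (pbSwap pb i) (sI pb p i lam) I = a * lam i - a + S := by
        rw [res'_at_I pb h1' hI hb (sI pb p i lam), hmuI]; ring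
      have hvui : sig (pbSwap pb i) p r (sI pb p i lam) i = sig pb p r lam I :=
        sig_eq_of_res (f5.trans e3.symm) (f6.trans e4.symm)
      have hvuI : sig (pbSwap pb i) p r (sI pb p i lam) I = sig pb p r lam i :=
        sig_eq_of_res (f7.trans e1.symm) (f8.trans e2.symm)
      have hc2 : ((a * lam i + a * lam I : ℤ) : ZMod p) ≠ 0 := by
        intro h0
        apply hc
        rw [← hI, hb]
        push_cast at h0 ⊢
        linear_combination h0
      by_cases hy0 : sig pb p r lam I = 0
      · -- BRANCH A : letter 0 at I, shift to the right
        have hmem := WLshift h1' Hoff hy0 (hvui.trans hy0) hvuI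
        refine assembleSwap (fun k => hmem k) (Or.inr (not_rplus_of_sig_ne (by rw [hy0]; norm_num))) ?_
        intro M hM1 hM2
        by_cases hMI : M = I
        · exfalso
          have := hM1.1
          rw [hMI, hy0] at this
          norm_num at this
        by_cases hMi : M = i
        · rw [hMi, if_pos rfl]
          have hP1 := sig_eq_one_iff.mp (hMi ▸ hM1.1)
          rw [e1] at hP1
          have hcne : ((sg pb i * (lam + eps i) i
              - sg pb (i + 1) * (lam + eps i) (i + 1) : ℤ) : ZMod p) ≠ 0 := by
            have v1 : (lam + eps i) i = lam i + 1 := by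
              simp only [Pi.add_apply, eps, if_pos rfl, eq_self_iff_true, if_true]
            have v2 : (lam + eps i) (i + 1) = lam (i + 1) := by
              simp only [Pi.add_apply, eps, if_neg (hI ▸ hne1 : i + 1 ≠ i), add_zero]
            rw [v1, v2, ← hI, hb]
            intro h0
            have h1x : sig pb p r lam I = 1 := sig_eq_one_iff.mpr (by
              rw [e3]; push_cast at h0 hP1 ⊢; linear_combination hP1 - h0)
            rw [hy0] at h1x
            norm_num at h1x
          rw [sI_of_ne pb _ hcne, hmu, swapL_add_eps_i lam (hI ▸ hne1), ← hI]
          abel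
        · rw [if_neg hMi, if_neg hMI]
          exact hsI_off M hMi hMI
      by_cases hx0 : sig pb p r lam i = 0
      · -- BRANCH B : letter 0 at i, shift to the left
        have hmem0 := WLshift h1' (fun k h h' => (Hoff k h h').symm) (hvuI.trans hx0) hx0
          hvui.symm
        have hmem : ∀ k, RPW (sig (pbSwap pb i) p r (sI pb p i lam)) k
            ↔ RPW (sig pb p r lam) (if k = i then I else if k = I then i else k) := by
          intro k
          have h' := hmem0 (if k = i then I else if k = I then i else k)
          rw [tau_invol h1' k] at h'
          exact h'.symm
        refine assembleSwap hmem (Or.inl (not_rplus_of_sig_ne (by rw [hx0]; norm_num))) ?_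
        intro M hM1 hM2
        by_cases hMi : M = i
        · exfalso
          have := hM1.1
          rw [hMi, hx0] at this
          norm_num at this
        by_cases hMI : M = I
        · rw [hMI, if_neg hne1, if_pos rfl]
          have hP3 := sig_eq_one_iff.mp (hMI ▸ hM1.1)
          rw [e3] at hP3
          have hcne : ((sg pb i * (lam + eps I) i
              - sg pb (i + 1) * (lam + eps I) (i + 1) : ℤ) : ZMod p) ≠ 0 := by
            have v1 : (lam + eps I) i = lam i := by
              simp only [Pi.add_apply, eps, if_neg (Ne.symm hne1 : i ≠ I), add_zero]
            have v2 : (lam + eps I) (i + 1) = lam I + 1 := by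
              rw [← hI]
              simp only [Pi.add_apply, eps, if_pos rfl, eq_self_iff_true, if_true]
            rw [v1, v2, ← hI, hb]
            intro h0
            have h1x : sig pb p r lam i = 1 := sig_eq_one_iff.mpr (by
              rw [e1]; push_cast at h0 hP3 ⊢; linear_combination hP3 + h0)
            rw [hx0] at h1x
            norm_num at h1x
          rw [sI_of_ne pb _ hcne, hmu, hI, swapL_add_eps_I lam (hI ▸ hne1)]
          abel
        · rw [if_neg hMi, if_neg hMI]
          exact hsI_off M hMi hMI
      by_cases hxy : sig pb p r lam i = sig pb p r lam I
      · -- BRANCH C : equal letters at i and I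
        have hweq : sig (pbSwap pb i) p r (sI pb p i lam) = sig pb p r lam := by
          funext k
          by_cases hki : k = i
          · rw [hki, hvui, hxy]
          · by_cases hkI : k = I
            · rw [hkI, hvuI, hxy]
            · exact (Hoff k hki hkI).symm
        refine assembleEq (fun k => by rw [hweq]) ?_
        intro M hM1 hM2
        by_cases hMi : M = i
        · exfalso
          have hui1 : sig pb p r lam i = 1 := hMi ▸ hM1.1
          have hRI : RPlus pb p r lam I := by
            rw [rplus_iff_rpw]
            exact plusplus h1' (hxy ▸ hui1) ((rplus_iff_rpw pb lam i).mp (hMi ▸ hM1))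
          have hle := hM2 I hRI
          rw [hMi] at hle
          have : (I : ℕ) ≤ (i : ℕ) := hle
          omega
        by_cases hMI : M = I
        · have huI1 : sig pb p r lam I = 1 := hMI ▸ hM1.1
          have hui1 : sig pb p r lam i = 1 := hxy.trans huI1
          have hP1 := sig_eq_one_iff.mp hui1
          rw [e1] at hP1
          have hP3 := sig_eq_one_iff.mp huI1
          rw [e3] at hP3
          rw [hMI]
          have hc0 : ((sg pb i * (lam + eps I) i
              - sg pb (i + 1) * (lam + eps I) (i + 1) : ℤ) : ZMod p) = 0 := by
            have v1 : (lam + eps I) i = lam i := by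
              simp only [Pi.add_apply, eps, if_neg (Ne.symm hne1 : i ≠ I), add_zero]
            have v2 : (lam + eps I) (i + 1) = lam I + 1 := by
              rw [← hI]
              simp only [Pi.add_apply, eps, if_pos rfl, eq_self_iff_true, if_true]
            rw [v1, v2, ← hI, hb]
            push_cast at hP1 hP3 ⊢
            linear_combination hP1 - hP3
          rw [sI_of_zero pb _ hc0, hmu, hI, swapL_add_eps_I lam (hI ▸ hne1)]
          abel
        · exact hsI_off M hMi hMI
      · -- BRANCH D : opposite letters at i and I, impossible in case 2
        exfalso
        rcases sig_cases pb lam i (r := r) with hx | hx | hx <;>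
          rcases sig_cases pb lam I (r := r) with hy | hy | hy <;>
            first
              | exact hx0 hx
              | exact hy0 hy
              | exact hxy (hx.trans hy.symm)
              | skip
        · -- u i = 1, u I = -1
          have hP1 := sig_eq_one_iff.mp hx
          rw [e1] at hP1
          have hQ := (sig_eq_neg_iff.mp hy).2
          rw [e4] at hQ
          apply hc2
          push_cast at hP1 hQ ⊢
          linear_combination hP1 - hQ
        · -- u i = -1, u I = 1
          have hP1 := (sig_eq_neg_iff.mp hx).2
          rw [e2] at hP1
          have hQ := sig_eq_one_iff.mp hy
          rw [e3] at hQ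
          apply hc2
          push_cast at hP1 hQ ⊢
          linear_combination hP1 - hQ
  refine ⟨hmain, ?_⟩
  rw [← hmain]
  cases fStar pb p r lam <;> simp

end Kujawa
end
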